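/- arXiv:2411.15227 — 2 statements merged into one kernel-verified Lean document; each statement's English description precedes it below -/
import Mathlib

section
/- (Picone-type inequality for the Finsler p-Laplacian) Let p > 1 and let F: ℝ^N → ℝ be convex, C^1 away from 0, with F(tξ) = |t|F(ξ). Let u > 0 and v ≥ 0 be differentiable functions on an open set with ∇u ≠ 0. Then ⟨F(∇u)^{p-1} ∇F(∇u), ∇(v^p / u^{p-1})⟩ ≤ F(∇v)^p pointwise. -/
open Real RealInnerProductSpace

lemma lem_inner_grad {N : ℕ} {f : EuclideanSpace ℝ (Fin N) → ℝ} {x y : EuclideanSpace ℝ (Fin N)}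
    (hf : DifferentiableAt ℝ f x) :
    ⟪gradient f x, y⟫ = fderiv ℝ f x y := by
  have h := hf.hasGradientAt
  rw [hasGradientAt_iff_hasFDerivAt] at h
  rw [h.fderiv, InnerProductSpace.toDual_apply_apply]

lemma lem_young {p s t : ℝ} (hp : 1 < p) (hs : 0 ≤ s) (ht : 0 ≤ t) :
    p * (t ^ (p - 1) * s) - (p - 1) * t ^ p ≤ s ^ p := by
  have hp0 : (0:ℝ) < p := lt_trans one_pos hp
  have hp1 : (0:ℝ) < p - 1 := by linarith
  have hpq : p.HolderConjugate (p / (p - 1)) := Real.HolderConjugate.conjExponent hp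
  have h := Real.young_inequality_of_nonneg hs (Real.rpow_nonneg ht (p-1)) hpq
  have h2 : (t ^ (p - 1)) ^ (p / (p - 1)) = t ^ p := by
    rw [← Real.rpow_mul ht]
    congr 1
    field_simp
  rw [h2] at h
  have h3 : t ^ p / (p / (p - 1)) = t ^ p * (p - 1) / p := by
    rw [div_div_eq_mul_div]
  rw [h3, ← add_div] at h
  rw [le_div_iff₀ hp0] at h
  nlinarith [h]

lemma lem_support {N : ℕ} (F : EuclideanSpace ℝ (Fin N) → ℝ)
    (hconv : ConvexOn ℝ Set.univ F)
    (hhom : ∀ (t : ℝ) (ξ : EuclideanSpace ℝ (Fin N)), F (t • ξ) = |t| * F ξ)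
    (a : EuclideanSpace ℝ (Fin N)) (hDF : DifferentiableAt ℝ F a) :
    (∀ η, ⟪gradient F a, η⟫ ≤ F η) ∧ ⟪gradient F a, a⟫ = F a ∧ (∀ ξ, 0 ≤ F ξ) := by
  have hF0 : F 0 = 0 := by simpa using hhom 0 0
  have hsub : ∀ ξ η : EuclideanSpace ℝ (Fin N), F (ξ + η) ≤ F ξ + F η := by
    intro ξ η
    have h2 := hconv.2 (Set.mem_univ ξ) (Set.mem_univ η)
      (by norm_num : (0:ℝ) ≤ 1/2) (by norm_num : (0:ℝ) ≤ 1/2) (by norm_num)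
    have hm : ξ + η = (2:ℝ) • ((1/2 : ℝ) • ξ + (1/2:ℝ) • η) := by module
    have h3 : F (ξ + η) = 2 * F ((1/2 : ℝ) • ξ + (1/2:ℝ) • η) := by
      rw [hm, hhom]; norm_num
    simp only [smul_eq_mul] at h2
    rw [h3]; linarith
  have hFnn : ∀ ξ, 0 ≤ F ξ := by
    intro ξ
    have hneg : F (-ξ) = F ξ := by
      have h := hhom (-1) ξ
      simpa using h
    have h := hsub ξ (-ξ)
    rw [add_neg_cancel, hF0, hneg] at h
    linarith
  have hkey : ∀ ξ, fderiv ℝ F a ξ ≤ F (ξ + a) - F a := by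
    intro ξ
    set φ : ℝ → ℝ := fun t => F (t • ξ + a) with hφ
    have hφc : ConvexOn ℝ Set.univ φ := by
      refine ⟨convex_univ, ?_⟩
      intro s _ t _ c d hc hd hcd
      have hid : (c * s + d * t) • ξ + a = c • (s • ξ + a) + d • (t • ξ + a) := by
        have : c • (s • ξ + a) + d • (t • ξ + a) = (c * s + d * t) • ξ + (c + d) • a := by
          module
        rw [this, hcd, one_smul]
      show F ((c * s + d * t) • ξ + a) ≤ c * F (s • ξ + a) + d * F (t • ξ + a)
      rw [hid]
      exact hconv.2 (Set.mem_univ _) (Set.mem_univ _) hc hd hcd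
    have h0 : (0:ℝ) • ξ + a = a := by simp
    have hline : HasDerivAt (fun t : ℝ => t • ξ + a) ξ 0 := by
      simpa using ((hasDerivAt_id (0:ℝ)).smul_const ξ).add_const a
    have hF' : HasFDerivAt F (fderiv ℝ F a) ((fun t : ℝ => t • ξ + a) 0) := by
      simpa [h0] using hDF.hasFDerivAt
    have hcomp : HasDerivAt φ (fderiv ℝ F a ξ) 0 := hF'.comp_hasDerivAt 0 hline
    have hslope := hφc.le_slope_of_hasDerivWithinAt (Set.mem_univ (0:ℝ))
      (Set.mem_univ (1:ℝ)) one_pos hcomp.hasDerivWithinAt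
    have h1 : slope φ 0 1 = F (ξ + a) - F a := by
      simp [slope, hφ, h0]
    rwa [h1] at hslope
  have hw : ∀ η, ⟪gradient F a, η⟫ ≤ F η := by
    intro η
    rw [lem_inner_grad hDF]
    have h1 := hkey η
    have h2 := hsub η a
    linarith
  refine ⟨hw, le_antisymm (hw a) ?_, hFnn⟩
  have h3 := hkey (-a)
  rw [neg_add_cancel, hF0, map_neg] at h3
  rw [lem_inner_grad hDF]
  linarith

theorem stmt1 {N : ℕ} (p : ℝ) (hp : 1 < p) (F : EuclideanSpace ℝ (Fin N) → ℝ)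
    (hconv : ConvexOn ℝ Set.univ F)
    (hdiff : ∀ ξ : EuclideanSpace ℝ (Fin N), ξ ≠ 0 → DifferentiableAt ℝ F ξ)
    (hhom : ∀ (t : ℝ) (ξ : EuclideanSpace ℝ (Fin N)), F (t • ξ) = |t| * F ξ)
    (u v : EuclideanSpace ℝ (Fin N) → ℝ) (x : EuclideanSpace ℝ (Fin N))
    (hu : DifferentiableAt ℝ u x) (hv : DifferentiableAt ℝ v x)
    (hupos : 0 < u x) (hvnn : 0 ≤ v x) (hgu : gradient u x ≠ 0) :
    F (gradient u x) ^ (p - 1) *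
      ⟪gradient F (gradient u x), gradient (fun y => v y ^ p / u y ^ (p - 1)) x⟫
      ≤ F (gradient v x) ^ p := by
  have hp0 : (0:ℝ) < p := lt_trans one_pos hp
  have hp1 : (0:ℝ) < p - 1 := by linarith
  have hDF : DifferentiableAt ℝ F (gradient u x) := hdiff _ hgu
  obtain ⟨hw, heuler, hFnn⟩ := lem_support F hconv hhom (gradient u x) hDF
  set a := gradient u x with ha
  set b := gradient v x with hb
  set w := gradient F a with hwdef
  have hB : 0 ≤ F b := hFnn b
  have hBp : 0 ≤ F b ^ p := Real.rpow_nonneg hB p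
  -- derivative of the quotient
  have hUq0 : (0:ℝ) < u x ^ (p - 1) := Real.rpow_pos_of_pos hupos _
  have hVp : HasFDerivAt (fun y => v y ^ p) ((p * v x ^ (p-1)) • fderiv ℝ v x) x :=
    hv.hasFDerivAt.rpow_const (Or.inr hp.le)
  have hUq : HasFDerivAt (fun y => u y ^ (p-1))
      (((p-1) * u x ^ (p-1-1)) • fderiv ℝ u x) x :=
    hu.hasFDerivAt.rpow_const (Or.inl hupos.ne')
  have hUinv : HasFDerivAt (fun y => (u y ^ (p-1))⁻¹)
      ((-((u x ^ (p-1)) ^ 2)⁻¹) • (((p-1) * u x ^ (p-1-1)) • fderiv ℝ u x)) x :=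
    (hasDerivAt_inv hUq0.ne').comp_hasFDerivAt x hUq
  have hg : HasFDerivAt (fun y => v y ^ p * (u y ^ (p-1))⁻¹)
      ((v x ^ p) • ((-((u x ^ (p-1)) ^ 2)⁻¹) • (((p-1) * u x ^ (p-1-1)) • fderiv ℝ u x))
        + ((u x ^ (p-1))⁻¹) • ((p * v x ^ (p-1)) • fderiv ℝ v x)) x :=
    hVp.mul hUinv
  simp only [div_eq_mul_inv]
  rw [real_inner_comm, lem_inner_grad hg.differentiableAt, hg.fderiv]
  have hIu : fderiv ℝ u x w = F a := by
    rw [← lem_inner_grad hu, real_inner_comm]; exact heuler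
  have hIv : fderiv ℝ v x w = ⟪b, w⟫ := (lem_inner_grad hv).symm
  simp only [ContinuousLinearMap.add_apply, ContinuousLinearMap.smul_apply, smul_eq_mul,
    hIu, hIv]
  have hIvle : ⟪b, w⟫ ≤ F b := by rw [real_inner_comm]; exact hw b
  have hFa : 0 ≤ F a := hFnn a
  rcases eq_or_lt_of_le hFa with hA | hA
  · rw [← hA, Real.zero_rpow hp1.ne', zero_mul]
    exact hBp
  rcases eq_or_lt_of_le hvnn with hV | hV
  · rw [← hV, Real.zero_rpow hp0.ne', Real.zero_rpow hp1.ne']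
    simpa using hBp
  -- main case: F a > 0, v x > 0
  set t := v x * F a / u x with htdef
  have htnn : 0 ≤ t := by positivity
  have hyoung := lem_young hp hB htnn
  have ht1 : t ^ (p-1) = v x ^ (p-1) * F a ^ (p-1) / u x ^ (p-1) := by
    rw [htdef, Real.div_rpow (by positivity) hupos.le, Real.mul_rpow hvnn hFa]
  have ht2 : t ^ p = v x ^ p * F a ^ p / u x ^ p := by
    rw [htdef, Real.div_rpow (by positivity) hupos.le, Real.mul_rpow hvnn hFa]
  have e1 : u x ^ (p-1-1) = u x ^ (p-1) / u x := Real.rpow_sub_one hupos.ne' _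
  have e2 : F a ^ p = F a ^ (p-1) * F a := by
    rw [← Real.rpow_add_one hA.ne' (p-1)]
    congr 1; ring
  have e3 : u x ^ p = u x ^ (p-1) * u x := by
    rw [← Real.rpow_add_one hupos.ne' (p-1)]
    congr 1; ring
  have e4 : v x ^ p = v x ^ (p-1) * v x := by
    rw [← Real.rpow_add_one hV.ne' (p-1)]
    congr 1; ring
  calc F a ^ (p - 1) *
        (v x ^ p * (-((u x ^ (p - 1)) ^ 2)⁻¹ * ((p - 1) * u x ^ (p - 1 - 1) * F a)) +
          (u x ^ (p - 1))⁻¹ * (p * v x ^ (p - 1) * ⟪b, w⟫))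
      ≤ F a ^ (p - 1) *
        (v x ^ p * (-((u x ^ (p - 1)) ^ 2)⁻¹ * ((p - 1) * u x ^ (p - 1 - 1) * F a)) +
          (u x ^ (p - 1))⁻¹ * (p * v x ^ (p - 1) * F b)) := by
        apply mul_le_mul_of_nonneg_left _ (Real.rpow_nonneg hFa _)
        apply add_le_add_right
        apply mul_le_mul_of_nonneg_left _ (by positivity)
        apply mul_le_mul_of_nonneg_left hIvle
        exact mul_nonneg hp0.le (Real.rpow_nonneg hvnn _)
    _ = p * (t ^ (p-1) * F b) - (p - 1) * t ^ p := by
        rw [ht1, ht2, e1, e2, e3, e4]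
        field_simp
        ring
    _ ≤ F b ^ p := hyoung
end

section
/- Let Ω ⊂ ℝ^N be open and connected, let U ∈ W^{1,1}_loc(Ω) be continuous with U > 0 on Ω, and let v ∈ W^{1,1}_loc(Ω) satisfy v ∇U − U ∇v = 0 almost everywhere in Ω. Then v is a constant multiple of U on Ω. -/
open Real MeasureTheory Metric Set

lemma aux_fubini {N : ℕ} (Z : Set (EuclideanSpace ℝ (Fin N))) (hZm : MeasurableSet Z)
    (hZ : volume Z = 0) (a b : EuclideanSpace ℝ (Fin N)) :
    ∀ᵐ u : EuclideanSpace ℝ (Fin N), volume {t : ℝ | a + u + t • b ∈ Z} = 0 := by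
  set f : EuclideanSpace ℝ (Fin N) × ℝ → EuclideanSpace ℝ (Fin N) :=
    fun p => a + p.1 + p.2 • b with hf
  have hfc : Continuous f := by fun_prop
  have hsm : MeasurableSet (f ⁻¹' Z) := hZm.preimage hfc.measurable
  have h0 : (volume.prod volume) (f ⁻¹' Z) = 0 := by
    rw [Measure.prod_apply_symm hsm]
    have : ∀ t : ℝ, volume ((fun u => (u, t)) ⁻¹' (f ⁻¹' Z)) = 0 := by
      intro t
      have : ((fun u : EuclideanSpace ℝ (Fin N) => (u, t)) ⁻¹' (f ⁻¹' Z))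
          = (fun u => (a + t • b) + u) ⁻¹' Z := by
        have key : ∀ u : EuclideanSpace ℝ (Fin N), a + u + t • b = (a + t • b) + u := by
          intro u; abel
        ext u; simp [hf, Set.mem_preimage, key]
      rw [this, measure_preimage_add]
      exact hZ
    simp [this]
  have := (Measure.measure_prod_null hsm).mp h0
  filter_upwards [this] with u hu
  exact hu

lemma aux_deriv_zero {N : ℕ} {U v : EuclideanSpace ℝ (Fin N) → ℝ}
    {x : EuclideanSpace ℝ (Fin N)} (hU : DifferentiableAt ℝ U x)
    (hv : DifferentiableAt ℝ v x) (hne : U x ≠ 0)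
    (hrel : v x • fderiv ℝ U x = U x • fderiv ℝ v x) :
    HasFDerivAt (fun y => v y / U y) (0 : EuclideanSpace ℝ (Fin N) →L[ℝ] ℝ) x := by
  have hinv : HasFDerivAt (fun y => (U y)⁻¹) ((-(U x ^ 2)⁻¹) • fderiv ℝ U x) x :=
    (hasDerivAt_inv hne).comp_hasFDerivAt x hU.hasFDerivAt
  have hmul := hv.hasFDerivAt.mul hinv
  have hzero : v x • ((-(U x ^ 2)⁻¹) • fderiv ℝ U x) + (U x)⁻¹ • fderiv ℝ v x = 0 := by
    rw [smul_comm, hrel, smul_smul, ← add_smul]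
    have : (-(U x ^ 2)⁻¹) * U x + (U x)⁻¹ = 0 := by field_simp; ring
    rw [this, zero_smul]
  rw [hzero] at hmul
  refine hmul.congr_of_eventuallyEq (Filter.Eventually.of_forall fun y => ?_)
  simp [div_eq_mul_inv]

lemma aux_seg {N : ℕ} {w : EuclideanSpace ℝ (Fin N) → ℝ} {Ω Z : Set (EuclideanSpace ℝ (Fin N))}
    (hdiff : ∀ x ∈ Ω, DifferentiableAt ℝ w x)
    (hfz : ∀ x ∈ Ω, x ∉ Z → fderiv ℝ w x = 0)
    (p q : EuclideanSpace ℝ (Fin N))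
    (hseg : ∀ t ∈ Icc (0:ℝ) 1, p + t • (q - p) ∈ Ω)
    (hT : volume {t : ℝ | p + t • (q - p) ∈ Z} = 0) :
    w q = w p := by
  set γ : ℝ → EuclideanSpace ℝ (Fin N) := fun t => p + t • (q - p) with hγdef
  set g' : ℝ → ℝ := fun t => fderiv ℝ w (γ t) (q - p) with hg'def
  have huIcc : uIcc (0:ℝ) 1 = Icc 0 1 := uIcc_of_le zero_le_one
  have hasd : ∀ t ∈ uIcc (0:ℝ) 1, HasDerivAt (fun s => w (γ s)) (g' t) t := by
    intro t ht
    rw [huIcc] at ht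
    have hγ : HasDerivAt γ (q - p) t := by
      simpa only [one_smul, id] using ((hasDerivAt_id t).smul_const (q - p)).const_add p
    exact ((hdiff _ (hseg t ht)).hasFDerivAt).comp_hasDerivAt t hγ
  have haeZ : ∀ᵐ t : ℝ, γ t ∉ Z := by
    rw [ae_iff]; simpa using hT
  have haeg : ∀ᵐ t : ℝ, t ∈ Set.uIoc (0:ℝ) 1 → g' t = 0 := by
    filter_upwards [haeZ] with t htZ ht
    rw [Set.uIoc_of_le zero_le_one] at ht
    have htIcc : t ∈ Icc (0:ℝ) 1 := Ioc_subset_Icc_self ht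
    rw [hg'def]
    simp only [hfz (γ t) (hseg t htIcc) htZ, ContinuousLinearMap.zero_apply]
  have hint : IntervalIntegrable g' volume 0 1 := by
    rw [intervalIntegrable_iff]
    refine (integrable_zero _ _ _).congr ?_
    have h1 := ae_restrict_of_ae (s := Set.uIoc (0:ℝ) 1) haeg
    have h2 := ae_restrict_mem (μ := (volume : Measure ℝ)) (measurableSet_uIoc (a := (0:ℝ)) (b := 1))
    filter_upwards [h1, h2] with t h1t h2t
    exact (h1t h2t).symm
  have heq := intervalIntegral.integral_eq_sub_of_hasDerivAt hasd hint
  have hzero : ∫ t in (0:ℝ)..1, g' t = 0 := by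
    rw [intervalIntegral.integral_congr_ae haeg]
    simp
  have h1 : γ 1 = q := by simp [hγdef]
  have h0 : γ 0 = p := by simp [hγdef]
  rw [hzero] at heq
  have := heq.symm
  rw [h1, h0] at this
  linarith [this]

theorem stmt16 {N : ℕ} (Ω : Set (EuclideanSpace ℝ (Fin N)))
    (hΩo : IsOpen Ω) (hΩc : IsConnected Ω)
    (U v : EuclideanSpace ℝ (Fin N) → ℝ)
    (hUc : ContinuousOn U Ω) (hUpos : ∀ x ∈ Ω, 0 < U x)
    (hU : ∀ x ∈ Ω, DifferentiableAt ℝ U x)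
    (hv : ∀ x ∈ Ω, DifferentiableAt ℝ v x)
    (hrel : ∀ᵐ x ∂(volume.restrict Ω), v x • gradient U x - U x • gradient v x = 0) :
    ∃ c : ℝ, ∀ x ∈ Ω, v x = c * U x := by
  classical
  obtain ⟨x₀, hx₀⟩ := hΩc.nonempty
  rw [ae_restrict_iff' hΩo.measurableSet] at hrel
  have hbad : volume {x | ¬ (x ∈ Ω → v x • gradient U x - U x • gradient v x = 0)} = 0 :=
    ae_iff.mp hrel
  obtain ⟨Z, hsub, hZm, hZ0⟩ := exists_measurable_superset_of_null hbad
  set w : EuclideanSpace ℝ (Fin N) → ℝ := fun y => v y / U y with hw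
  have hdiffw : ∀ x ∈ Ω, DifferentiableAt ℝ w x := by
    intro x hx
    simp only [hw, div_eq_mul_inv]
    exact (hv x hx).mul ((hU x hx).inv (hUpos x hx).ne')
  have hfrel : ∀ x ∈ Ω, x ∉ Z → v x • fderiv ℝ U x = U x • fderiv ℝ v x := by
    intro x hx hxZ
    have hrx : v x • gradient U x - U x • gradient v x = 0 := by
      by_contra h
      exact hxZ (hsub (by intro himp; exact h (himp hx)))
    have h2 := congrArg (InnerProductSpace.toDual ℝ (EuclideanSpace ℝ (Fin N))) hrx
    simp only [map_sub, _root_.map_smul, map_zero, gradient,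
      LinearIsometryEquiv.apply_symm_apply] at h2
    exact sub_eq_zero.mp h2
  have hfz : ∀ x ∈ Ω, x ∉ Z → fderiv ℝ w x = 0 := fun x hx hxZ =>
    (aux_deriv_zero (hU x hx) (hv x hx) (hUpos x hx).ne' (hfrel x hx hxZ)).fderiv
  -- local constancy
  have hloc : ∀ x ∈ Ω, ∃ r > 0, ball x r ⊆ Ω ∧ ∀ y ∈ ball x r, ∀ z ∈ ball x r, w y = w z := by
    intro x hx
    obtain ⟨r, hr, hball⟩ := Metric.isOpen_iff.mp hΩo x hx
    refine ⟨r/4, by positivity, fun p hp => hball (ball_subset_ball (by linarith) hp), ?_⟩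
    intro y hy z hz
    by_contra hne
    have hyΩ : y ∈ Ω := hball (ball_subset_ball (by linarith) hy)
    have hzΩ : z ∈ Ω := hball (ball_subset_ball (by linarith) hz)
    set d := dist (w y) (w z) with hd
    have hdpos : 0 < d := dist_pos.mpr hne
    obtain ⟨δ₁, hδ₁, hcy⟩ := Metric.continuousAt_iff.mp ((hdiffw y hyΩ).continuousAt)
      (d/2) (by linarith)
    obtain ⟨δ₂, hδ₂, hcz⟩ := Metric.continuousAt_iff.mp ((hdiffw z hzΩ).continuousAt)
      (d/2) (by linarith)
    set δ := min (min δ₁ δ₂) (r/4) with hδdef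
    have hδpos : 0 < δ := lt_min (lt_min hδ₁ hδ₂) (by positivity)
    have hfub := aux_fubini Z hZm hZ0 y (z - y)
    have hexu : ∃ u ∈ ball (0 : EuclideanSpace ℝ (Fin N)) δ,
        volume {t : ℝ | y + u + t • (z - y) ∈ Z} = 0 := by
      by_contra h
      push_neg at h
      have hsubbad : ball (0 : EuclideanSpace ℝ (Fin N)) δ
          ⊆ {u | ¬ volume {t : ℝ | y + u + t • (z - y) ∈ Z} = 0} :=
        fun u hu => h u hu
      have h1 : volume (ball (0 : EuclideanSpace ℝ (Fin N)) δ) = 0 :=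
        le_antisymm (le_trans (measure_mono hsubbad) (le_of_eq (ae_iff.mp hfub))) (by simp)
      exact (Metric.measure_ball_pos volume _ hδpos).ne' h1
    obtain ⟨u, huδ, huP⟩ := hexu
    have hun : ‖u‖ < δ := by simpa [dist_zero_right] using mem_ball.mp huδ
    -- the translated segment stays in Ω
    have hsub' : ∀ t ∈ Icc (0:ℝ) 1, (y + u) + t • ((z + u) - (y + u)) ∈ Ω := by
      intro t ht
      apply hball
      rw [mem_ball]
      have he : (y + u) + t • ((z + u) - (y + u)) = y + u + t • (z - y) := by
        have : (z + u) - (y + u) = z - y := by abel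
        rw [this]
      rw [he]
      have h1 : dist (y + u + t • (z - y)) x = ‖(y - x) + u + t • (z - y)‖ := by
        rw [dist_eq_norm]; congr 1; abel
      rw [h1]
      have h2 : ‖(y - x) + u + t • (z - y)‖ ≤ ‖y - x‖ + ‖u‖ + ‖t • (z - y)‖ :=
        norm_add₃_le
      have h3 : ‖t • (z - y)‖ ≤ ‖z - y‖ := by
        rw [norm_smul, Real.norm_eq_abs, abs_of_nonneg ht.1]
        nlinarith [norm_nonneg (z - y), ht.2]
      have h4 : ‖z - y‖ < r/2 := by
        have := dist_triangle z x y
        rw [← dist_eq_norm]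
        have hzx : dist z x < r/4 := mem_ball.mp hz
        have hxy : dist x y < r/4 := by rw [dist_comm]; exact mem_ball.mp hy
        calc dist z y ≤ dist z x + dist x y := dist_triangle z x y
          _ < r/4 + r/4 := by linarith
          _ = r/2 := by ring
      have h5 : ‖y - x‖ < r/4 := by rw [← dist_eq_norm]; exact mem_ball.mp hy
      have h6 : ‖u‖ < r/4 := lt_of_lt_of_le hun (le_trans (min_le_right _ _) le_rfl)
      linarith
    have hTnull : volume {t : ℝ | (y + u) + t • ((z + u) - (y + u)) ∈ Z} = 0 := by
      have he : ∀ t : ℝ, (y + u) + t • ((z + u) - (y + u)) = y + u + t • (z - y) := by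
        intro t
        have : (z + u) - (y + u) = z - y := by abel
        rw [this]
      simpa only [he] using huP
    have hwueq : w (z + u) = w (y + u) :=
      aux_seg hdiffw hfz (y + u) (z + u) hsub' hTnull
    have hδ1 : δ ≤ δ₁ := le_trans (min_le_left _ _) (min_le_left _ _)
    have hδ2 : δ ≤ δ₂ := le_trans (min_le_left _ _) (min_le_right _ _)
    have hdy : dist (y + u) y < δ₁ := by
      rw [dist_eq_norm]
      simpa using lt_of_lt_of_le hun hδ1
    have hdz : dist (z + u) z < δ₂ := by
      rw [dist_eq_norm]
      simpa using lt_of_lt_of_le hun hδ2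
    have hwy : dist (w (y + u)) (w y) < d/2 := hcy hdy
    have hwz : dist (w (z + u)) (w z) < d/2 := hcz hdz
    have : d ≤ dist (w y) (w (y + u)) + dist (w (y + u)) (w z) := dist_triangle _ _ _
    have h7 : dist (w (y + u)) (w z) = dist (w (z + u)) (w z) := by rw [hwueq]
    rw [dist_comm (w y)] at this
    rw [h7] at this
    linarith
  -- connectedness argument
  have hconst : ∀ x ∈ Ω, w x = w x₀ := by
    set S : Set (EuclideanSpace ℝ (Fin N)) := {x | x ∈ Ω ∧ w x = w x₀} with hS
    set T : Set (EuclideanSpace ℝ (Fin N)) := {x | x ∈ Ω ∧ w x ≠ w x₀} with hT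
    have hSo : IsOpen S := by
      rw [Metric.isOpen_iff]
      intro x hx
      obtain ⟨r, hr, hbΩ, hcon⟩ := hloc x hx.1
      exact ⟨r, hr, fun y hy => ⟨hbΩ hy, by
        rw [hcon y hy x (mem_ball_self hr)]; exact hx.2⟩⟩
    have hTo : IsOpen T := by
      rw [Metric.isOpen_iff]
      intro x hx
      obtain ⟨r, hr, hbΩ, hcon⟩ := hloc x hx.1
      exact ⟨r, hr, fun y hy => ⟨hbΩ hy, by
        rw [hcon y hy x (mem_ball_self hr)]; exact hx.2⟩⟩
    intro x hx
    by_contra hne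
    have hcover : Ω ⊆ S ∪ T := by
      intro p hp
      by_cases h : w p = w x₀
      · exact Or.inl ⟨hp, h⟩
      · exact Or.inr ⟨hp, h⟩
    have hSne : (Ω ∩ S).Nonempty := ⟨x₀, hx₀, hx₀, rfl⟩
    have hTne : (Ω ∩ T).Nonempty := ⟨x, hx, hx, hne⟩
    obtain ⟨p, _, hpS, hpT⟩ := hΩc.isPreconnected S T hSo hTo hcover hSne hTne
    exact hpT.2 hpS.2
  refine ⟨v x₀ / U x₀, fun x hx => ?_⟩
  have hne : U x ≠ 0 := (hUpos x hx).ne'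
  have hne0 : U x₀ ≠ 0 := (hUpos x₀ hx₀).ne'
  have heq : v x / U x = v x₀ / U x₀ := hconst x hx
  field_simp at heq
  rw [div_mul_eq_mul_div, eq_div_iff hne0]
  linarith [heq]
end
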